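/- For all integers n ≥ 0, 2·C_n(1/2) = L_{2n}, where L denotes the Lucas numbers. -/
import Mathlib


def C (x : ℝ) : ℕ → ℝ
  | 0 => 1
  | 1 => 3 * x
  | n + 2 => 6 * x * C x (n + 1) - C x n

def lucas : ℕ → ℕ
  | 0 => 2
  | 1 => 1
  | n + 2 => lucas (n + 1) + lucas n

theorem stmt12 (n : ℕ) : 2 * C (1 / 2) n = lucas (2 * n) := by
  induction n using Nat.twoStepInduction with
  | zero => simp [C, lucas]
  | one => norm_num [C, lucas]
  | more n ih1 ih2 =>
    have h : 2 * (n + 2) = 2 * n + 4 := by ring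
    have h1 : 2 * (n + 1) = 2 * n + 2 := by ring
    rw [h] at *
    rw [h1] at ih2
    show 2 * (6 * (1/2 : ℝ) * C (1/2) (n+1) - C (1/2) n) = _
    push_cast [show lucas (2*n+4) = lucas (2*n+3) + lucas (2*n+2) from rfl,
      show lucas (2*n+3) = lucas (2*n+2) + lucas (2*n+1) from rfl,
      show lucas (2*n+2) = lucas (2*n+1) + lucas (2*n) from rfl] at *
    linarith
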